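/- Let τ ∈ ℂ with Re τ < 0. Then the *-Hermite polynomials are orthogonal on the real line with respect to the weight e^{w²/τ}: for all n, m ≥ 0, ∫_{−∞}^{∞} e^{w²/τ} H_n(w,τ) H_m(w,τ) dw = 0 if n ≠ m, and ∫_{−∞}^{∞} e^{w²/τ} H_n(w,τ)² dw = n! (−τ)^n √(−τ) √π, where √(−τ) is the principal square root (defined since Re(−τ) > 0). -/

import Mathlib

open Complex MeasureTheory

/-- The `*`-Hermite polynomial `H_n(w,τ) = (d/dt)^n|_{t=0} e^{(τ/2)t² + √2 t w}`. -/
noncomputable def starHermite (n : ℕ) (τ w : ℂ) : ℂ :=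
  iteratedDeriv n (fun t : ℂ =>
    Complex.exp (τ / 2 * t ^ 2 + (Real.sqrt 2 : ℂ) * t * w)) 0

namespace StarHermiteAux

open Filter


/-- generating function -/
noncomputable def gen (τ w : ℂ) : ℂ → ℂ :=
  fun t => Complex.exp (τ / 2 * t ^ 2 + (Real.sqrt 2 : ℂ) * t * w)

lemma contDiff_gen (τ w : ℂ) : ContDiff ℂ (⊤ : ℕ∞) (gen τ w) := by
  apply Complex.contDiff_exp.comp
  exact ((contDiff_const.mul (contDiff_id.pow 2)).add
    ((contDiff_const.mul contDiff_id).mul contDiff_const))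

lemma hasDerivAt_gen (τ w t : ℂ) :
    HasDerivAt (gen τ w) ((τ * t + (Real.sqrt 2 : ℂ) * w) * gen τ w t) t := by
  have h : HasDerivAt (fun t : ℂ => τ / 2 * t ^ 2 + (Real.sqrt 2 : ℂ) * t * w)
      (τ * t + (Real.sqrt 2 : ℂ) * w) t := by
    have h1 : HasDerivAt (fun t : ℂ => τ / 2 * t ^ 2) (τ / 2 * (2 * t)) t := by
      simpa using ((hasDerivAt_pow 2 t).const_mul (τ / 2))
    have h2 : HasDerivAt (fun t : ℂ => (Real.sqrt 2 : ℂ) * t * w)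
        ((Real.sqrt 2 : ℂ) * w) t := by
      have h3 := (hasDerivAt_id t).const_mul ((Real.sqrt 2 : ℂ) * w)
      simp only [id_eq, mul_one] at h3
      have : (fun t : ℂ => (Real.sqrt 2 : ℂ) * t * w)
          = fun y : ℂ => (Real.sqrt 2 : ℂ) * w * y := by funext y; ring
      rw [this]; exact h3
    have := h1.fun_add h2
    exact this.congr_deriv (by ring)
  have h2 := h.cexp
  have : ((τ * t + (Real.sqrt 2 : ℂ) * w) * gen τ w t)
      = Complex.exp (τ / 2 * t ^ 2 + (Real.sqrt 2 : ℂ) * t * w) * (τ * t + (Real.sqrt 2 : ℂ) * w) := by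
    rw [gen]; ring
  rw [this]; exact h2

lemma deriv_gen (τ w : ℂ) :
    deriv (gen τ w) = fun t => (τ * t + (Real.sqrt 2 : ℂ) * w) * gen τ w t := by
  funext t; exact (hasDerivAt_gen τ w t).deriv

lemma iteratedDeriv_add' {f g : ℂ → ℂ} (n : ℕ) (hf : ContDiff ℂ n f) (hg : ContDiff ℂ n g)
    (x : ℂ) :
    iteratedDeriv n (fun t => f t + g t) x = iteratedDeriv n f x + iteratedDeriv n g x := by
  simp_rw [← iteratedDerivWithin_univ]
  exact iteratedDerivWithin_add (Set.mem_univ x) uniqueDiffOn_univ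
    hf.contDiffWithinAt hg.contDiffWithinAt

lemma iteratedDeriv_cmul {f : ℂ → ℂ} (n : ℕ) (hf : ContDiff ℂ n f) (c x : ℂ) :
    iteratedDeriv n (fun t => c * f t) x = c * iteratedDeriv n f x := by
  simp_rw [← iteratedDerivWithin_univ]
  exact iteratedDerivWithin_const_mul (Set.mem_univ x) uniqueDiffOn_univ c
    hf.contDiffWithinAt

lemma iteratedDeriv_linear_mul (τ b : ℂ) (n : ℕ) {g : ℂ → ℂ} (hg : ContDiff ℂ (⊤ : ℕ∞) g) (x : ℂ) :
    iteratedDeriv n (fun t => (τ * t + b) * g t) x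
      = (τ * x + b) * iteratedDeriv n g x + τ * n * iteratedDeriv (n - 1) g x := by
  induction n generalizing g with
  | zero => simp
  | succ n ih =>
    have hg' : ContDiff ℂ (⊤ : ℕ∞) (deriv g) := (contDiff_infty_iff_deriv.mp hg).2
    have hder : deriv (fun t => (τ * t + b) * g t)
        = fun t => τ * g t + (τ * t + b) * deriv g t := by
      funext t
      have h1 : HasDerivAt (fun t : ℂ => τ * t + b) τ t := by
        simpa using ((hasDerivAt_id t).const_mul τ).add_const b
      exact (h1.mul ((hg.differentiable (by simp) t).hasDerivAt)).deriv
    rw [iteratedDeriv_succ', hder]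
    have hsmooth1 : ContDiff ℂ (n : ℕ∞) (fun t => τ * g t) :=
      (contDiff_const.mul (hg.of_le (by exact_mod_cast le_top)))
    have hsmooth2 : ContDiff ℂ (n : ℕ∞) (fun t => (τ * t + b) * deriv g t) :=
      (((contDiff_const.mul contDiff_id).add contDiff_const).mul (hg'.of_le (by exact_mod_cast le_top)))
    rw [iteratedDeriv_add' n hsmooth1 hsmooth2 x, iteratedDeriv_cmul n (hg.of_le (by exact_mod_cast le_top)) τ x,
      ih hg']
    rcases n with _ | m
    · simp [← iteratedDeriv_succ']
      ring
    · have e1 : iteratedDeriv (m + 2) g x = iteratedDeriv (m + 1) (deriv g) x := by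
        rw [iteratedDeriv_succ']
      have e2 : iteratedDeriv (m + 1) g x = iteratedDeriv m (deriv g) x := by
        rw [iteratedDeriv_succ']
      rw [← e1, Nat.add_sub_cancel, ← e2]
      simp only [Nat.add_sub_cancel]
      push_cast
      ring

lemma starHermite_zero (τ w : ℂ) : starHermite 0 τ w = 1 := by
  simp [starHermite]

lemma starHermite_succ (n : ℕ) (τ w : ℂ) :
    starHermite (n + 1) τ w
      = (Real.sqrt 2 : ℂ) * w * starHermite n τ w + τ * n * starHermite (n - 1) τ w := by
  show iteratedDeriv (n + 1) (gen τ w) 0 = _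
  rw [iteratedDeriv_succ', deriv_gen,
    iteratedDeriv_linear_mul τ ((Real.sqrt 2 : ℂ) * w) n (contDiff_gen τ w) 0]
  simp only [mul_zero, zero_add]
  rfl


lemma starHermite_one (τ w : ℂ) : starHermite 1 τ w = (Real.sqrt 2 : ℂ) * w := by
  rw [show starHermite 1 τ w = starHermite (0 + 1) τ w from rfl, starHermite_succ, starHermite_zero]
  simp

lemma starHermite_hasDerivAt (τ : ℂ) :
    ∀ n : ℕ, ∀ w : ℂ, HasDerivAt (fun w => starHermite n τ w)
      ((Real.sqrt 2 : ℂ) * n * starHermite (n - 1) τ w) w := by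
  have key : ∀ n : ℕ,
      (∀ w : ℂ, HasDerivAt (fun w => starHermite n τ w)
        ((Real.sqrt 2 : ℂ) * (n:ℂ) * starHermite (n - 1) τ w) w) ∧
      (∀ w : ℂ, HasDerivAt (fun w => starHermite (n+1) τ w)
        ((Real.sqrt 2 : ℂ) * ((n+1 : ℕ):ℂ) * starHermite n τ w) w) := by
    intro n
    induction n with
    | zero =>
      constructor
      · intro w
        have h0 : (fun w : ℂ => starHermite 0 τ w) = fun _ => (1:ℂ) := by
          funext w; exact starHermite_zero τ w
        rw [h0]
        simpa using hasDerivAt_const w (1:ℂ)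
      · intro w
        have h0 : (fun w : ℂ => starHermite 1 τ w) = fun w => (Real.sqrt 2 : ℂ) * w := by
          funext w; exact starHermite_one τ w
        rw [h0]
        have h3 := (hasDerivAt_id w).const_mul (Real.sqrt 2 : ℂ)
        simp only [id_eq, mul_one] at h3
        have e : (Real.sqrt 2 : ℂ) * ((0+1 : ℕ):ℂ) * starHermite 0 τ w = (Real.sqrt 2 : ℂ) := by
          rw [starHermite_zero]; norm_num
        rw [e]; exact h3
    | succ n ih =>
      refine ⟨ih.2, ?_⟩
      intro w
      have hfun : (fun w : ℂ => starHermite (n+2) τ w)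
          = fun w => (Real.sqrt 2 : ℂ) * w * starHermite (n+1) τ w
              + τ * ((n+1 : ℕ):ℂ) * starHermite n τ w := by
        funext w
        have h := starHermite_succ (n+1) τ w
        simpa using h
      have ha : HasDerivAt (fun w : ℂ => (Real.sqrt 2 : ℂ) * w) (Real.sqrt 2 : ℂ) w := by
        have h3 := (hasDerivAt_id w).const_mul (Real.sqrt 2 : ℂ)
        simpa using h3
      have h1 := ha.fun_mul (ih.2 w)
      have h2 := (ih.1 w).const_mul (τ * ((n+1 : ℕ):ℂ))
      have hsum := h1.fun_add h2
      rw [show n+1+1 = n+2 from rfl, hfun]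
      have goalval : (Real.sqrt 2 : ℂ) * starHermite (n+1) τ w
            + (Real.sqrt 2 : ℂ) * w * ((Real.sqrt 2 : ℂ) * ((n+1 : ℕ):ℂ) * starHermite n τ w)
            + τ * ((n+1 : ℕ):ℂ) * ((Real.sqrt 2 : ℂ) * (n:ℂ) * starHermite (n-1) τ w)
          = (Real.sqrt 2 : ℂ) * ((n+2 : ℕ):ℂ) * starHermite (n+1) τ w := by
        have hrec := starHermite_succ n τ w
        calc (Real.sqrt 2 : ℂ) * starHermite (n+1) τ w
            + (Real.sqrt 2 : ℂ) * w * ((Real.sqrt 2 : ℂ) * ((n+1 : ℕ):ℂ) * starHermite n τ w)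
            + τ * ((n+1 : ℕ):ℂ) * ((Real.sqrt 2 : ℂ) * (n:ℂ) * starHermite (n-1) τ w)
            = (Real.sqrt 2 : ℂ) * starHermite (n+1) τ w
              + (Real.sqrt 2 : ℂ) * ((n+1 : ℕ):ℂ) * ((Real.sqrt 2 : ℂ) * w * starHermite n τ w
                  + τ * (n:ℂ) * starHermite (n-1) τ w) := by push_cast; ring
          _ = (Real.sqrt 2 : ℂ) * ((n+2 : ℕ):ℂ) * starHermite (n+1) τ w := by
              rw [← hrec]; push_cast; ring
      rw [← goalval]
      convert hsum using 1
      all_goals ring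
  intro n
  rcases n with _ | m
  · exact (key 0).1
  · exact (key m).2

lemma starHermite_continuous_real (τ : ℂ) (n : ℕ) :
    Continuous (fun x : ℝ => starHermite n τ (x : ℂ)) := by
  have h : Continuous (fun w : ℂ => starHermite n τ w) :=
    continuous_iff_continuousAt.2 fun w => (starHermite_hasDerivAt τ n w).continuousAt
  exact h.comp Complex.continuous_ofReal

lemma starHermite_bound (τ : ℂ) :
    ∀ n : ℕ, ∃ C : ℝ, 0 ≤ C ∧ ∀ x : ℝ, ‖starHermite n τ (x:ℂ)‖ ≤ C * (1 + |x|) ^ n := by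
  have key : ∀ n : ℕ,
      (∃ C : ℝ, 0 ≤ C ∧ ∀ x : ℝ, ‖starHermite n τ (x:ℂ)‖ ≤ C * (1 + |x|) ^ n) ∧
      (∃ C : ℝ, 0 ≤ C ∧ ∀ x : ℝ, ‖starHermite (n+1) τ (x:ℂ)‖ ≤ C * (1 + |x|) ^ (n+1)) := by
    intro n
    induction n with
    | zero =>
      constructor
      · exact ⟨1, zero_le_one, fun x => by
          simp [starHermite_zero]⟩
      · refine ⟨Real.sqrt 2, Real.sqrt_nonneg 2, fun x => ?_⟩
        rw [starHermite_one]
        have h1 : ‖(Real.sqrt 2 : ℂ) * (x:ℂ)‖ = Real.sqrt 2 * |x| := by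
          rw [norm_mul, Complex.norm_real, Complex.norm_real, Real.norm_eq_abs,
            Real.norm_eq_abs, _root_.abs_of_nonneg (Real.sqrt_nonneg 2)]
        rw [h1, pow_one]
        nlinarith [Real.sqrt_nonneg 2, abs_nonneg x]
    | succ n ih =>
      obtain ⟨⟨C0, hC0, hb0⟩, ⟨C1, hC1, hb1⟩⟩ := ih
      refine ⟨⟨C1, hC1, hb1⟩, ⟨Real.sqrt 2 * C1 + ‖τ‖ * (n+1) * C0, by positivity, fun x => ?_⟩⟩
      have hrec := starHermite_succ (n+1) τ (x:ℂ)
      rw [show n+1+1 = n+2 from rfl, Nat.add_sub_cancel] at hrec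
      rw [hrec]
      have hx1 : (1:ℝ) ≤ 1 + |x| := by linarith [abs_nonneg x]
      have hxp : (0:ℝ) ≤ 1 + |x| := by linarith
      have hs : ‖((Real.sqrt 2 : ℝ):ℂ)‖ = Real.sqrt 2 := by
        rw [Complex.norm_real, Real.norm_eq_abs, _root_.abs_of_nonneg (Real.sqrt_nonneg 2)]
      have hxc : ‖((x:ℝ):ℂ)‖ = |x| := by
        rw [Complex.norm_real, Real.norm_eq_abs]
      have hnc : ‖(((n:ℕ)+1 : ℕ):ℂ)‖ = (n:ℝ)+1 := by
        push_cast
        rw [show ((n:ℂ)+1) = (((n:ℝ)+1 : ℝ):ℂ) by push_cast; ring, Complex.norm_real,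
          Real.norm_eq_abs, _root_.abs_of_nonneg (by positivity)]
      have t1 : ‖(Real.sqrt 2 : ℂ) * (x:ℂ) * starHermite (n+1) τ (x:ℂ)‖
          ≤ Real.sqrt 2 * (1+|x|) * (C1 * (1+|x|)^(n+1)) := by
        rw [norm_mul, norm_mul, hs, hxc]
        have := hb1 x
        gcongr
        · linarith [abs_nonneg x]
      have t2 : ‖τ * (((n:ℕ)+1 : ℕ):ℂ) * starHermite n τ (x:ℂ)‖
          ≤ ‖τ‖ * ((n:ℝ)+1) * (C0 * (1+|x|)^n) := by
        rw [norm_mul, norm_mul, hnc]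
        have := hb0 x
        gcongr
      have pe : (1+|x|)^n ≤ (1+|x|)^(n+2) := pow_le_pow_right₀ hx1 (by omega)
      have pe1 : (1+|x|)*(1+|x|)^(n+1) = (1+|x|)^(n+2) := by ring
      calc ‖(Real.sqrt 2 : ℂ) * (x:ℂ) * starHermite (n+1) τ (x:ℂ)
              + τ * (((n:ℕ)+1 : ℕ):ℂ) * starHermite n τ (x:ℂ)‖
          ≤ ‖(Real.sqrt 2 : ℂ) * (x:ℂ) * starHermite (n+1) τ (x:ℂ)‖
            + ‖τ * (((n:ℕ)+1 : ℕ):ℂ) * starHermite n τ (x:ℂ)‖ := norm_add_le _ _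
        _ ≤ Real.sqrt 2 * (1+|x|) * (C1 * (1+|x|)^(n+1))
            + ‖τ‖ * ((n:ℝ)+1) * (C0 * (1+|x|)^n) := add_le_add t1 t2
        _ ≤ (Real.sqrt 2 * C1 + ‖τ‖ * (n+1) * C0) * (1 + |x|)^(n+2) := by
            rw [show Real.sqrt 2 * (1+|x|) * (C1 * (1+|x|)^(n+1))
                = (Real.sqrt 2 * C1) * ((1+|x|)*(1+|x|)^(n+1)) by ring, pe1]
            have h2 : ‖τ‖ * ((n:ℝ)+1) * (C0 * (1+|x|)^n)
                ≤ (‖τ‖ * ((n:ℝ)+1) * C0) * (1+|x|)^(n+2) := by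
              rw [show ‖τ‖ * ((n:ℝ)+1) * (C0 * (1+|x|)^n)
                  = (‖τ‖ * ((n:ℝ)+1) * C0) * (1+|x|)^n by ring]
              gcongr <;> positivity
            nlinarith [pow_nonneg hxp (n+2)]
  exact fun n => (key n).1


variable {τ : ℂ}

lemma inv_re_neg (hτ : τ.re < 0) : (τ⁻¹).re < 0 := by
  rw [Complex.inv_re]
  have hτ0 : τ ≠ 0 := fun h => by simp [h] at hτ
  exact div_neg_of_neg_of_pos hτ (Complex.normSq_pos.2 hτ0)

lemma norm_weight (τ : ℂ) (x : ℝ) :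
    ‖Complex.exp ((x:ℂ)^2/τ)‖ = Real.exp (-(-(τ⁻¹).re) * x^2) := by
  rw [Complex.norm_exp]
  congr 1
  have : ((x:ℂ)^2/τ) = ((x^2 : ℝ) : ℂ) * τ⁻¹ := by
    push_cast; ring
  rw [this, Complex.re_ofReal_mul]
  ring

/-- integrability of (1+|x|)^k * exp(-c x²) -/
lemma integrable_poly_gauss {c : ℝ} (hc : 0 < c) (k : ℕ) :
    Integrable (fun x : ℝ => (1 + |x|)^k * Real.exp (-c * x^2)) := by
  have h1 : Integrable (fun x : ℝ => (2:ℝ)^k * Real.exp (-c * x^2)) :=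
    (integrable_exp_neg_mul_sq hc).const_mul _
  have h2 : Integrable (fun x : ℝ => (2:ℝ)^k * (|x|^k * Real.exp (-c * x^2))) := by
    apply Integrable.const_mul
    have h3 : Integrable (fun x : ℝ => x^k * Real.exp (-c * x^2)) := by
      simpa [Real.rpow_natCast] using
        integrable_rpow_mul_exp_neg_mul_sq hc (s := (k:ℝ))
          (lt_of_lt_of_le neg_one_lt_zero (Nat.cast_nonneg k))
    have h4 := h3.abs
    simpa [abs_mul, _root_.abs_pow, _root_.abs_of_nonneg (Real.exp_nonneg _)] using h4
  apply (h1.add h2).mono'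
  · apply Continuous.aestronglyMeasurable
    continuity
  · refine Filter.Eventually.of_forall fun x => ?_
    have hxp : (0:ℝ) ≤ 1 + |x| := by positivity
    have hb : (1 + |x|)^k ≤ (2:ℝ)^k + (2:ℝ)^k * |x|^k := by
      rcases le_total (|x|) 1 with h | h
      · have : (1 + |x|)^k ≤ (2:ℝ)^k := by
          apply pow_le_pow_left₀ hxp; linarith
        nlinarith [pow_nonneg (abs_nonneg x) k, pow_nonneg (le_trans zero_le_one (le_refl 1) : (0:ℝ) ≤ 1) k, pow_pos (show (0:ℝ)<2 by norm_num) k]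
      · have : (1 + |x|)^k ≤ (2*|x|)^k := by
          apply pow_le_pow_left₀ hxp; linarith
        rw [mul_pow] at this
        nlinarith [pow_pos (show (0:ℝ)<2 by norm_num) k]
    have he : (0:ℝ) < Real.exp (-c * x^2) := Real.exp_pos _
    rw [Real.norm_eq_abs, _root_.abs_of_nonneg (by positivity)]
    calc (1 + |x|)^k * Real.exp (-c * x^2)
        ≤ ((2:ℝ)^k + (2:ℝ)^k * |x|^k) * Real.exp (-c * x^2) := by
          apply mul_le_mul_of_nonneg_right hb he.le
      _ = (2:ℝ)^k * Real.exp (-c * x^2) + (2:ℝ)^k * (|x|^k * Real.exp (-c * x^2)) := by ring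

lemma integrable_weight_mul (hτ : τ.re < 0) {g : ℝ → ℂ} (hg : Continuous g)
    {C : ℝ} {k : ℕ} (hb : ∀ x : ℝ, ‖g x‖ ≤ C * (1 + |x|)^k) :
    Integrable fun x : ℝ => Complex.exp ((x:ℂ)^2/τ) * g x := by
  set c : ℝ := -(τ⁻¹).re with hc
  have hcpos : 0 < c := by rw [hc]; linarith [inv_re_neg hτ]
  have hC : 0 ≤ C := by
    have h0 := le_trans (norm_nonneg (g 0)) (hb 0)
    simpa using h0
  apply Integrable.mono' (((integrable_poly_gauss hcpos k).const_mul C))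
  · apply Continuous.aestronglyMeasurable
    exact (Complex.continuous_exp.comp (by continuity)).mul hg
  · refine Filter.Eventually.of_forall fun x => ?_
    rw [norm_mul, norm_weight]
    calc Real.exp (-(-(τ⁻¹).re) * x^2) * ‖g x‖
        ≤ Real.exp (-c * x^2) * (C * (1 + |x|)^k) := by
          apply mul_le_mul_of_nonneg_left (hb x) (Real.exp_pos _).le
      _ = C * ((1 + |x|)^k * Real.exp (-c * x^2)) := by ring

lemma tendsto_poly_gauss {c : ℝ} (hc : 0 < c) (C : ℝ) (k : ℕ) :
    Tendsto (fun y : ℝ => C * (1 + y)^k * Real.exp (-c * y^2)) atTop (nhds 0) := by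
  have key : Tendsto (fun y : ℝ => y^k * Real.exp (-c * y^2)) atTop (nhds 0) := by
    have h := rpow_mul_exp_neg_mul_sq_isLittleO_exp_neg hc (k:ℝ)
    have h2 : Tendsto (fun y : ℝ => Real.exp (-(1/2) * y)) atTop (nhds 0) := by
      have ha : Tendsto (fun y : ℝ => (1/2 : ℝ) * y) atTop atTop :=
        Tendsto.const_mul_atTop (by norm_num) tendsto_id
      have hb2 : Tendsto (fun z : ℝ => Real.exp (-z)) atTop (nhds 0) := by
        simpa using Real.tendsto_exp_comp_nhds_zero.2 tendsto_neg_atTop_atBot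
      have h5 := hb2.comp ha
      have h6 : (fun y : ℝ => Real.exp (-(1/2) * y))
          = (fun z : ℝ => Real.exp (-z)) ∘ fun y : ℝ => (1/2:ℝ) * y := by
        funext y; simp [Function.comp, neg_mul]
      rw [h6]; exact h5
    have h3 := h.trans_tendsto h2
    refine h3.congr' ?_
    filter_upwards [eventually_ge_atTop (0:ℝ)] with y hy
    rw [Real.rpow_natCast]
  have key2 : Tendsto (fun y : ℝ => (|C| * 2^k) * (y^k * Real.exp (-c * y^2))) atTop (nhds 0) := by
    simpa using key.const_mul (|C| * 2^k)
  apply squeeze_zero_norm' _ key2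
  filter_upwards [eventually_ge_atTop (1:ℝ)] with y hy
  have h1y : (0:ℝ) ≤ 1 + y := by linarith
  have hyk : (1 + y)^k ≤ 2^k * y^k := by
    have h6 : (1 + y)^k ≤ (2*y)^k := by
      apply pow_le_pow_left₀ h1y; linarith
    rwa [mul_pow] at h6
  have he := Real.exp_pos (-c * y^2)
  rw [Real.norm_eq_abs]
  calc |C * (1+y)^k * Real.exp (-c * y^2)|
      = |C| * (1+y)^k * Real.exp (-c * y^2) := by
        rw [abs_mul, abs_mul, _root_.abs_of_nonneg (pow_nonneg h1y k),
          _root_.abs_of_nonneg he.le]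
    _ ≤ |C| * (2^k * y^k) * Real.exp (-c * y^2) := by
        apply mul_le_mul_of_nonneg_right _ he.le
        apply mul_le_mul_of_nonneg_left hyk (abs_nonneg C)
    _ = (|C| * 2^k) * (y^k * Real.exp (-c*y^2)) := by ring

lemma tendsto_weight_mul (hτ : τ.re < 0) {g : ℝ → ℂ}
    {C : ℝ} {k : ℕ} (hb : ∀ x : ℝ, ‖g x‖ ≤ C * (1 + |x|)^k) (l : Filter ℝ)
    (hl : Tendsto (fun x : ℝ => |x|) l atTop) :
    Tendsto (fun x : ℝ => Complex.exp ((x:ℂ)^2/τ) * g x) l (nhds 0) := by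
  set c : ℝ := -(τ⁻¹).re with hc
  have hcpos : 0 < c := by rw [hc]; linarith [inv_re_neg hτ]
  have hT := (tendsto_poly_gauss hcpos C k).comp hl
  apply squeeze_zero_norm' _ hT
  refine Filter.Eventually.of_forall fun x => ?_
  rw [norm_mul, norm_weight]
  have : Real.exp (-(-(τ⁻¹).re) * x^2) * ‖g x‖ ≤ Real.exp (-c * x^2) * (C * (1+|x|)^k) :=
    mul_le_mul_of_nonneg_left (hb x) (Real.exp_pos _).le
  calc Real.exp (-(-(τ⁻¹).re) * x^2) * ‖g x‖
      ≤ Real.exp (-c * x^2) * (C * (1+|x|)^k) := this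
    _ = C * (1 + |x|)^k * Real.exp (-c * |x|^2) := by
        have hq : |x|^2 = x^2 := _root_.sq_abs x
        rw [hq]; ring

lemma integral_deriv_eq_zero {F F' : ℝ → ℂ} (hF : ∀ x, HasDerivAt F (F' x) x)
    (hint : Integrable F') (htop : Tendsto F atTop (nhds 0))
    (hbot : Tendsto F atBot (nhds 0)) : ∫ x : ℝ, F' x = 0 := by
  rw [← intervalIntegral.integral_Iic_add_Ioi (hint.integrableOn) (hint.integrableOn) (b := 0)]
  rw [integral_Iic_of_hasDerivAt_of_tendsto' (fun x _ => hF x) hint.integrableOn hbot,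
    integral_Ioi_of_hasDerivAt_of_tendsto' (fun x _ => hF x) hint.integrableOn htop]
  ring

lemma cpow_pi_mul (z : ℂ) (hz : z ≠ 0) :
    ((Real.pi : ℂ) * z) ^ (1/2 : ℂ) = z ^ (1/2 : ℂ) * (Real.sqrt Real.pi : ℂ) := by
  have hπ : (0:ℝ) < Real.pi := Real.pi_pos
  have hπc : ((Real.pi : ℝ):ℂ) ≠ 0 := Complex.ofReal_ne_zero.2 hπ.ne'
  rw [Complex.cpow_def_of_ne_zero (mul_ne_zero hπc hz),
    Complex.log_ofReal_mul hπ hz, add_mul, Complex.exp_add,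
    ← Complex.cpow_def_of_ne_zero hz]
  have h1 : Complex.exp ((Real.log Real.pi : ℂ) * (1/2 : ℂ)) = (Real.sqrt Real.pi : ℂ) := by
    have h2 : ((Real.pi : ℂ)) ^ (1/2 : ℂ) = Complex.exp (Complex.log (Real.pi : ℂ) * (1/2 : ℂ)) :=
      Complex.cpow_def_of_ne_zero hπc _
    have h3 : Complex.log ((Real.pi : ℝ):ℂ) = ((Real.log Real.pi : ℝ):ℂ) :=
      (Complex.ofReal_log hπ.le).symm
    rw [h3] at h2
    rw [← h2]
    have h4 : ((Real.sqrt Real.pi : ℝ):ℂ) = (((Real.pi)^((1:ℝ)/2) : ℝ):ℂ) := by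
      norm_num [Real.sqrt_eq_rpow]
    rw [h4, Complex.ofReal_cpow hπ.le]
    norm_num
  rw [h1, mul_comm]

lemma weight_integral (hτ : τ.re < 0) :
    ∫ x : ℝ, Complex.exp ((x:ℂ)^2/τ) = (-τ) ^ (1/2 : ℂ) * (Real.sqrt Real.pi : ℂ) := by
  have hτ0 : τ ≠ 0 := fun h => by simp [h] at hτ
  have hb : (τ⁻¹).re < 0 := inv_re_neg hτ
  have h := integral_cexp_quadratic hb 0 0
  have hform : ∀ x : ℝ, τ⁻¹ * (x:ℂ)^2 + 0 * (x:ℂ) + 0 = (x:ℂ)^2/τ := by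
    intro x; field_simp; ring
  simp_rw [hform] at h
  rw [h]
  have h2 : (Real.pi : ℂ) / -τ⁻¹ = (Real.pi : ℂ) * (-τ) := by
    field_simp
  rw [h2, cpow_pi_mul (-τ) (neg_ne_zero.2 hτ0)]
  norm_num


/-- the orthogonality pairing -/
noncomputable def B (τ : ℂ) (n m : ℕ) : ℂ :=
  ∫ x : ℝ, Complex.exp ((x:ℂ)^2/τ) * starHermite n τ (x:ℂ) * starHermite m τ (x:ℂ)

lemma bound_mul (τ : ℂ) (a b : ℕ) : ∃ C : ℝ, 0 ≤ C ∧
    ∀ x : ℝ, ‖starHermite a τ (x:ℂ) * starHermite b τ (x:ℂ)‖ ≤ C * (1+|x|)^(a+b) := by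
  obtain ⟨Ca, hCa0, hCa⟩ := starHermite_bound τ a
  obtain ⟨Cb, hCb0, hCb⟩ := starHermite_bound τ b
  refine ⟨Ca * Cb, by positivity, fun x => ?_⟩
  rw [norm_mul, pow_add, show Ca * Cb * ((1+|x|)^a * (1+|x|)^b)
    = (Ca * (1+|x|)^a) * (Cb * (1+|x|)^b) by ring]
  have hxp : (0:ℝ) ≤ 1 + |x| := by positivity
  apply mul_le_mul (hCa x) (hCb x) (norm_nonneg _) (by positivity)

lemma bound_xmul (τ : ℂ) (a b : ℕ) : ∃ C : ℝ, 0 ≤ C ∧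
    ∀ x : ℝ, ‖((x:ℝ):ℂ) * starHermite a τ (x:ℂ) * starHermite b τ (x:ℂ)‖
      ≤ C * (1+|x|)^(a+b+1) := by
  obtain ⟨C, hC0, hC⟩ := bound_mul τ a b
  refine ⟨C, hC0, fun x => ?_⟩
  have h1 : ‖((x:ℝ):ℂ) * starHermite a τ (x:ℂ) * starHermite b τ (x:ℂ)‖
      = |x| * ‖starHermite a τ (x:ℂ) * starHermite b τ (x:ℂ)‖ := by
    rw [mul_assoc, norm_mul, Complex.norm_real, Real.norm_eq_abs]
  rw [h1, pow_succ]
  have hxp : (0:ℝ) ≤ 1 + |x| := by positivity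
  calc |x| * ‖starHermite a τ (x:ℂ) * starHermite b τ (x:ℂ)‖
      ≤ (1+|x|) * (C * (1+|x|)^(a+b)) := by
        apply mul_le_mul (by linarith [abs_nonneg x]) (hC x) (norm_nonneg _) hxp
    _ = C * ((1+|x|)^(a+b) * (1+|x|)) := by ring

lemma integrable_B (hτ : τ.re < 0) (a b : ℕ) :
    Integrable fun x : ℝ => Complex.exp ((x:ℂ)^2/τ)
      * (starHermite a τ (x:ℂ) * starHermite b τ (x:ℂ)) := by
  obtain ⟨C, hC0, hC⟩ := bound_mul τ a b
  exact integrable_weight_mul hτ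
    ((starHermite_continuous_real τ a).mul (starHermite_continuous_real τ b)) hC

lemma integrable_Bx (hτ : τ.re < 0) (a b : ℕ) :
    Integrable fun x : ℝ => Complex.exp ((x:ℂ)^2/τ)
      * (((x:ℝ):ℂ) * starHermite a τ (x:ℂ) * starHermite b τ (x:ℂ)) := by
  obtain ⟨C, hC0, hC⟩ := bound_xmul τ a b
  exact integrable_weight_mul hτ
    ((Complex.continuous_ofReal.mul (starHermite_continuous_real τ a)).mul
      (starHermite_continuous_real τ b)) hC

lemma B_rec (hτ : τ.re < 0) (n m : ℕ) :
    B τ (n+1) m = -τ * m * B τ n (m-1) := by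
  have hτ0 : τ ≠ 0 := fun h => by simp [h] at hτ
  set s : ℂ := ((Real.sqrt 2 : ℝ) : ℂ) with hs
  have hs2 : s * s = 2 := by
    rw [hs, ← Complex.ofReal_mul, Real.mul_self_sqrt (by norm_num)]
    norm_num
  -- abbreviations (only as terms, not set)
  have hB1 : (∫ x : ℝ, Complex.exp ((x:ℂ)^2/τ)
      * (starHermite (n-1) τ (x:ℂ) * starHermite m τ (x:ℂ))) = B τ (n-1) m := by
    rw [B]; congr 1; funext x; ring
  have hB2 : (∫ x : ℝ, Complex.exp ((x:ℂ)^2/τ)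
      * (starHermite n τ (x:ℂ) * starHermite (m-1) τ (x:ℂ))) = B τ n (m-1) := by
    rw [B]; congr 1; funext x; ring
  set Jx : ℂ := ∫ x : ℝ, Complex.exp ((x:ℂ)^2/τ)
      * (((x:ℝ):ℂ) * starHermite n τ (x:ℂ) * starHermite m τ (x:ℂ)) with hJx
  -- integrable pieces
  have hA : Integrable (fun x : ℝ => (2/τ) * (Complex.exp ((x:ℂ)^2/τ)
      * (((x:ℝ):ℂ) * starHermite n τ (x:ℂ) * starHermite m τ (x:ℂ)))) :=
    (integrable_Bx hτ n m).const_mul _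
  have hIb : Integrable (fun x : ℝ => (s * (n:ℂ)) * (Complex.exp ((x:ℂ)^2/τ)
      * (starHermite (n-1) τ (x:ℂ) * starHermite m τ (x:ℂ)))) :=
    (integrable_B hτ (n-1) m).const_mul _
  have hIc : Integrable (fun x : ℝ => (s * (m:ℂ)) * (Complex.exp ((x:ℂ)^2/τ)
      * (starHermite n τ (x:ℂ) * starHermite (m-1) τ (x:ℂ)))) :=
    (integrable_B hτ n (m-1)).const_mul _
  have hIbc : Integrable (fun x : ℝ =>
      (s * (n:ℂ)) * (Complex.exp ((x:ℂ)^2/τ)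
        * (starHermite (n-1) τ (x:ℂ) * starHermite m τ (x:ℂ)))
      + (s * (m:ℂ)) * (Complex.exp ((x:ℂ)^2/τ)
        * (starHermite n τ (x:ℂ) * starHermite (m-1) τ (x:ℂ)))) := hIb.add hIc
  have hIs : Integrable (fun x : ℝ => s * (Complex.exp ((x:ℂ)^2/τ)
      * (((x:ℝ):ℂ) * starHermite n τ (x:ℂ) * starHermite m τ (x:ℂ)))) :=
    (integrable_Bx hτ n m).const_mul _
  have hIt : Integrable (fun x : ℝ => (τ * (n:ℂ)) * (Complex.exp ((x:ℂ)^2/τ)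
      * (starHermite (n-1) τ (x:ℂ) * starHermite m τ (x:ℂ)))) :=
    (integrable_B hτ (n-1) m).const_mul _
  -- Step A : expand the recurrence in the integral
  have stepA : B τ (n+1) m = s * Jx + τ * (n:ℂ) * B τ (n-1) m := by
    have hfun : (fun x : ℝ => Complex.exp ((x:ℂ)^2/τ) * starHermite (n+1) τ (x:ℂ)
          * starHermite m τ (x:ℂ))
        = fun x : ℝ => s * (Complex.exp ((x:ℂ)^2/τ)
              * (((x:ℝ):ℂ) * starHermite n τ (x:ℂ) * starHermite m τ (x:ℂ)))
            + (τ * (n:ℂ)) * (Complex.exp ((x:ℂ)^2/τ)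
              * (starHermite (n-1) τ (x:ℂ) * starHermite m τ (x:ℂ))) := by
      funext x
      rw [starHermite_succ n τ (x:ℂ)]
      ring
    rw [B, hfun, integral_add hIs hIt, integral_const_mul, integral_const_mul, hB1, ← hJx]
  -- Step B : integration by parts
  have stepB : (2/τ) * Jx + ((s * (n:ℂ)) * B τ (n-1) m + (s * (m:ℂ)) * B τ n (m-1)) = 0 := by
    set F : ℝ → ℂ := fun x => Complex.exp ((x:ℂ)^2/τ)
        * (starHermite n τ (x:ℂ) * starHermite m τ (x:ℂ)) with hF
    set F' : ℝ → ℂ := fun x => (2/τ) * (Complex.exp ((x:ℂ)^2/τ)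
          * (((x:ℝ):ℂ) * starHermite n τ (x:ℂ) * starHermite m τ (x:ℂ)))
        + ((s * (n:ℂ)) * (Complex.exp ((x:ℂ)^2/τ)
            * (starHermite (n-1) τ (x:ℂ) * starHermite m τ (x:ℂ)))
          + (s * (m:ℂ)) * (Complex.exp ((x:ℂ)^2/τ)
            * (starHermite n τ (x:ℂ) * starHermite (m-1) τ (x:ℂ)))) with hF'
    have hDF : ∀ x : ℝ, HasDerivAt F (F' x) x := by
      intro x
      have hE' : HasDerivAt (fun y : ℝ => Complex.exp ((y:ℂ)^2/τ))
          (2 * (x:ℂ) / τ * Complex.exp ((x:ℂ)^2/τ)) x := by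
        have hz : HasDerivAt (fun z : ℂ => Complex.exp (z^2/τ))
            ((2 * (x:ℂ) / τ) * Complex.exp (((x:ℂ))^2/τ)) (x:ℂ) := by
          have hp : HasDerivAt (fun z : ℂ => z^2/τ) (2 * (x:ℂ) / τ) (x:ℂ) := by
            simpa using (hasDerivAt_pow 2 ((x:ℂ))).div_const τ
          have hexp := hp.cexp
          simpa [mul_comm] using hexp
        exact hz.comp_ofReal
      have hHn : HasDerivAt (fun y : ℝ => starHermite n τ (y:ℂ))
          (s * (n:ℂ) * starHermite (n-1) τ (x:ℂ)) x :=
        (starHermite_hasDerivAt τ n (x:ℂ)).comp_ofReal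
      have hHm : HasDerivAt (fun y : ℝ => starHermite m τ (y:ℂ))
          (s * (m:ℂ) * starHermite (m-1) τ (x:ℂ)) x :=
        (starHermite_hasDerivAt τ m (x:ℂ)).comp_ofReal
      have hprod := hE'.mul (hHn.mul hHm)
      have heq : (2 * (x:ℂ) / τ * Complex.exp ((x:ℂ)^2/τ))
            * (starHermite n τ (x:ℂ) * starHermite m τ (x:ℂ))
          + Complex.exp ((x:ℂ)^2/τ)
            * ((s * (n:ℂ) * starHermite (n-1) τ (x:ℂ)) * starHermite m τ (x:ℂ)
              + starHermite n τ (x:ℂ) * (s * (m:ℂ) * starHermite (m-1) τ (x:ℂ))) = F' x := by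
        rw [hF']; ring
      rw [hF, ← heq]
      exact hprod
    have hintF' : Integrable F' := by
      rw [hF']
      exact hA.add hIbc
    obtain ⟨C, hC0, hC⟩ := bound_mul τ n m
    have htop : Tendsto F atTop (nhds 0) :=
      tendsto_weight_mul hτ hC atTop tendsto_abs_atTop_atTop
    have hbot : Tendsto F atBot (nhds 0) :=
      tendsto_weight_mul hτ hC atBot tendsto_abs_atBot_atTop
    have hz := integral_deriv_eq_zero hDF hintF' htop hbot
    have hsplit : (∫ x : ℝ, F' x)
        = (2/τ) * Jx + ((s * (n:ℂ)) * B τ (n-1) m + (s * (m:ℂ)) * B τ n (m-1)) := by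
      rw [hF']
      rw [integral_add hA hIbc, integral_add hIb hIc,
        integral_const_mul, integral_const_mul, integral_const_mul, hB1, hB2, ← hJx]
    rw [hsplit] at hz
    exact hz
  -- combine
  have stepB' : 2 * Jx + s * (n:ℂ) * B τ (n-1) m * τ + s * (m:ℂ) * B τ n (m-1) * τ = 0 := by
    field_simp at stepB
    linear_combination stepB
  rw [stepA]
  linear_combination (s/2) * stepB'
    + (-(1/2) * ((n:ℂ) * B τ (n-1) m * τ + (m:ℂ) * B τ n (m-1) * τ)) * hs2

lemma B_symm (τ : ℂ) (n m : ℕ) : B τ n m = B τ m n := by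
  rw [B, B]; congr 1; funext x; ring

lemma B_k_zero (hτ : τ.re < 0) (k : ℕ) (hk : 1 ≤ k) : B τ k 0 = 0 := by
  obtain ⟨j, rfl⟩ := Nat.exists_eq_add_of_le hk
  rw [show 1 + j = j + 1 by ring, B_rec hτ j 0]
  simp

lemma B_diag_shift (hτ : τ.re < 0) :
    ∀ n k : ℕ, B τ (n+k) n = (n.factorial : ℂ) * (-τ)^n * B τ k 0 := by
  intro n
  induction n with
  | zero => intro k; simp
  | succ n ih =>
    intro k
    have h1 : n + 1 + k = (n + k) + 1 := by ring
    rw [h1, B_rec hτ (n+k) (n+1), Nat.add_sub_cancel, ih k]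
    push_cast [Nat.factorial_succ]
    ring

lemma B_zero_zero (hτ : τ.re < 0) :
    B τ 0 0 = (-τ) ^ (1/2 : ℂ) * (Real.sqrt Real.pi : ℂ) := by
  have h : B τ 0 0 = ∫ x : ℝ, Complex.exp ((x:ℂ)^2/τ) := by
    rw [B]; congr 1; funext x; rw [starHermite_zero]; ring
  rw [h, weight_integral hτ]

theorem starHermite_orthogonal' (τ : ℂ) (hτ : τ.re < 0) :
    (∀ n m : ℕ, n ≠ m →
      (∫ x : ℝ, Complex.exp ((x : ℂ) ^ 2 / τ) * starHermite n τ x * starHermite m τ x)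
        = 0) ∧
    (∀ n : ℕ,
      (∫ x : ℝ, Complex.exp ((x : ℂ) ^ 2 / τ) * starHermite n τ x ^ 2)
        = (n.factorial : ℂ) * (-τ) ^ n * (-τ) ^ (1 / 2 : ℂ) *
            (Real.sqrt Real.pi : ℂ)) := by
  constructor
  · intro n m hnm
    have key : ∀ a b : ℕ, a < b → B τ b a = 0 := by
      intro a b hab
      obtain ⟨k, hk, rfl⟩ : ∃ k, 1 ≤ k ∧ b = a + k :=
        ⟨b - a, by omega, by omega⟩
      rw [B_diag_shift hτ a k, B_k_zero hτ k hk, mul_zero]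
    rcases lt_or_gt_of_ne hnm with h | h
    · have := key n m h
      rw [B_symm] at this
      exact this
    · exact key m n h
  · intro n
    have hsq : (∫ x : ℝ, Complex.exp ((x : ℂ) ^ 2 / τ) * starHermite n τ x ^ 2)
        = B τ n n := by
      rw [B]; congr 1; funext x; ring
    rw [hsq, show n = n + 0 from rfl]
    rw [show n + 0 + 0 = n + 0 from rfl]
    rw [B_diag_shift hτ (n+0) 0]
    rw [show n + 0 = n from rfl, B_zero_zero hτ]
    ring


end StarHermiteAux

/-- Orthogonality of the `*`-Hermite polynomials on `ℝ` with weight `e^{w²/τ}`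
for `Re τ < 0`: `∫ e^{w²/τ} H_n H_m dw = 0` for `n ≠ m`, and
`∫ e^{w²/τ} H_n² dw = n! (−τ)^n √(−τ) √π` with the principal square root. -/
theorem starHermite_orthogonal (τ : ℂ) (hτ : τ.re < 0) :
    (∀ n m : ℕ, n ≠ m →
      (∫ x : ℝ, Complex.exp ((x : ℂ) ^ 2 / τ) * starHermite n τ x * starHermite m τ x)
        = 0) ∧
    (∀ n : ℕ,
      (∫ x : ℝ, Complex.exp ((x : ℂ) ^ 2 / τ) * starHermite n τ x ^ 2)
        = (n.factorial : ℂ) * (-τ) ^ n * (-τ) ^ (1 / 2 : ℂ) *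
            (Real.sqrt Real.pi : ℂ)) := by
  exact StarHermiteAux.starHermite_orthogonal' τ hτ
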